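/- Let v_0,…,v_j ∈ ℝ^k be affinely independent with Σ_ℓ c_ℓ v_ℓ = 0 for some c_ℓ ≥ 0 with Σ_ℓ c_ℓ = 1. Let K = {y ∈ ℝ^k : v_ℓ·y ≤ 1 for all ℓ} and δ_K(A) = inf{λ ≥ 0 : A ⊆ λK + x for some x ∈ ℝ^k}. Then for every nonempty finite A ⊆ ℝ^k, δ_K(A) = Σ_{ℓ=0}^j c_ℓ h_A(v_ℓ), where h_A(v) = max_{a∈A} a·v. -/

import Mathlib

open scoped RealInnerProductSpace
lemma exists_inner_eq {k n : ℕ} (v : Fin n → EuclideanSpace ℝ (Fin k))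
    (c : Fin n → ℝ)
    (hker : ∀ d : Fin n → ℝ, (∑ l, d l • v l = 0) → d = (∑ l, d l) • c)
    (b : EuclideanSpace ℝ (Fin n)) (hb : ∑ l, c l * b l = 0) :
    ∃ x : EuclideanSpace ℝ (Fin k), ∀ l, ⟪v l, x⟫ = b l := by
  classical
  let T : EuclideanSpace ℝ (Fin k) →ₗ[ℝ] EuclideanSpace ℝ (Fin n) :=
    { toFun := fun x => WithLp.toLp 2 (fun l => ⟪v l, x⟫)
      map_add' := by intro x y; ext l; simp [inner_add_right]
      map_smul' := by intro r x; ext l; simp [inner_smul_right] }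
  set W := LinearMap.range T with hW
  suffices h : b ∈ W by
    obtain ⟨x, hx⟩ := h
    exact ⟨x, fun l => congrFun (congrArg WithLp.ofLp hx) l⟩
  by_contra hbW
  rw [← Submodule.orthogonal_orthogonal W, Submodule.mem_orthogonal] at hbW
  push_neg at hbW
  obtain ⟨d, hdW, hdb⟩ := hbW
  have key : ∀ x : EuclideanSpace ℝ (Fin k), ⟪∑ l, d l • v l, x⟫ = (0:ℝ) := by
    intro x
    have h1 : ⟪T x, d⟫ = 0 := hdW _ ⟨x, rfl⟩
    calc ⟪∑ l, d l • v l, x⟫ = ∑ l, d l * ⟪v l, x⟫ := by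
          rw [sum_inner]; exact Finset.sum_congr rfl fun l _ => real_inner_smul_left _ _ _
      _ = ⟪T x, d⟫ := by
          simp only [T, PiLp.inner_apply, RCLike.inner_apply, conj_trivial,
            LinearMap.coe_mk, AddHom.coe_mk]
      _ = 0 := h1
  have hd0 : ∑ l, d l • v l = 0 := by
    have := key (∑ l, d l • v l)
    exact inner_self_eq_zero.mp this
  have hdc := hker d hd0
  apply hdb
  have h2 : ⟪d, b⟫ = ∑ l, d l * b l := by
    simp only [PiLp.inner_apply, RCLike.inner_apply, conj_trivial]
    exact Finset.sum_congr rfl fun l _ => mul_comm _ _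
  rw [h2]
  have h3 : ∀ l, d l = (∑ m, d m) * c l := fun l => congrFun hdc l
  calc ∑ l, d l * b l = ∑ l, (∑ m, d m) * (c l * b l) := by
        refine Finset.sum_congr rfl fun l _ => ?_
        rw [h3 l]; ring
    _ = (∑ m, d m) * ∑ l, c l * b l := by rw [Finset.mul_sum]
    _ = 0 := by rw [hb, mul_zero]

theorem stmt_16 {k j : ℕ} (v : Fin (j + 1) → EuclideanSpace ℝ (Fin k))
    (hv : AffineIndependent ℝ v)
    (c : Fin (j + 1) → ℝ) (hc : ∀ l, 0 ≤ c l) (hc1 : ∑ l, c l = 1)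
    (hc0 : ∑ l, c l • v l = 0)
    (K : Set (EuclideanSpace ℝ (Fin k)))
    (hK : K = {y | ∀ l, ⟪v l, y⟫ ≤ 1})
    (A : Finset (EuclideanSpace ℝ (Fin k))) (hA : A.Nonempty) :
    sInf {lam : ℝ | 0 ≤ lam ∧ ∃ x : EuclideanSpace ℝ (Fin k),
        (A : Set (EuclideanSpace ℝ (Fin k))) ⊆ (fun y => lam • y + x) '' K} =
      ∑ l, c l * A.sup' hA (fun a => ⟪a, v l⟫) := by
  classical
  set S := {lam : ℝ | 0 ≤ lam ∧ ∃ x : EuclideanSpace ℝ (Fin k),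
      (A : Set (EuclideanSpace ℝ (Fin k))) ⊆ (fun y => lam • y + x) '' K} with hS
  have hker : ∀ d : Fin (j + 1) → ℝ, (∑ l, d l • v l = 0) → d = (∑ l, d l) • c := by
    intro d hd
    set s := ∑ l, d l with hs
    have h2 : ∑ l, (d l - s * c l) = 0 := by
      rw [Finset.sum_sub_distrib, ← Finset.mul_sum, hc1, mul_one, ← hs, sub_self]
    have h3 : ∑ l, (d l - s * c l) • v l = 0 := by
      have : ∀ l, (d l - s * c l) • v l = d l • v l - s • (c l • v l) := by
        intro l; rw [sub_smul, smul_smul]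
      simp_rw [this]
      rw [Finset.sum_sub_distrib, hd, ← Finset.smul_sum, hc0, smul_zero, sub_self]
    have h4 := affineIndependent_iff.mp hv Finset.univ _ h2 h3
    funext l
    have := h4 l (Finset.mem_univ l)
    simp only [Pi.smul_apply, smul_eq_mul]
    linarith
  set h : Fin (j + 1) → ℝ := fun l => A.sup' hA (fun a => ⟪a, v l⟫) with hh
  have hgoal : (∑ l, c l * A.sup' hA (fun a => ⟪a, v l⟫)) = ∑ l, c l * h l := rfl
  rw [hgoal]
  set lam0 : ℝ := ∑ l, c l * h l with hlam0
  have hx0 : ∀ x : EuclideanSpace ℝ (Fin k), ∑ l, c l * ⟪v l, x⟫ = 0 := by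
    intro x
    have h1 : ⟪∑ l, c l • v l, x⟫ = (0:ℝ) := by rw [hc0, inner_zero_left]
    rw [sum_inner] at h1
    calc ∑ l, c l * ⟪v l, x⟫ = ∑ l, ⟪c l • v l, x⟫ := by
          exact Finset.sum_congr rfl fun l _ => (real_inner_smul_left _ _ _).symm
      _ = 0 := h1
  obtain ⟨a0, ha0⟩ := hA
  have hlamnn : 0 ≤ lam0 := by
    have h1 : ∑ l, c l * ⟪v l, a0⟫ = 0 := hx0 a0
    have h2 : ∀ l, c l * ⟪v l, a0⟫ ≤ c l * h l := by
      intro l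
      apply mul_le_mul_of_nonneg_left _ (hc l)
      rw [real_inner_comm]
      exact Finset.le_sup' (fun a => ⟪a, v l⟫) ha0
    calc (0:ℝ) = ∑ l, c l * ⟪v l, a0⟫ := h1.symm
      _ ≤ ∑ l, c l * h l := Finset.sum_le_sum fun l _ => h2 l
  have hmem : ∀ μ : ℝ, lam0 < μ → μ ∈ S := by
    intro μ hμ
    have hμpos : 0 < μ := lt_of_le_of_lt hlamnn hμ
    have hb : ∑ l, c l * (h l - lam0) = 0 := by
      simp_rw [mul_sub]
      rw [Finset.sum_sub_distrib, ← Finset.sum_mul, hc1, one_mul, ← hlam0, sub_self]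
    obtain ⟨x, hx⟩ := exists_inner_eq v c hker (WithLp.toLp 2 (fun l => h l - lam0)) hb
    refine ⟨le_of_lt hμpos, x, ?_⟩
    intro a ha
    refine ⟨μ⁻¹ • (a - x), ?_, ?_⟩
    · rw [hK]
      intro l
      have h1 : ⟪v l, a - x⟫ ≤ lam0 := by
        rw [inner_sub_right, hx l, PiLp.toLp_apply]
        have h2 : ⟪v l, a⟫ ≤ h l := by
          rw [real_inner_comm]
          exact Finset.le_sup' (fun a => ⟪a, v l⟫) ha
        linarith
      rw [real_inner_smul_right]
      calc μ⁻¹ * ⟪v l, a - x⟫ ≤ μ⁻¹ * μ := by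
            apply mul_le_mul_of_nonneg_left (le_trans h1 (le_of_lt hμ)) (inv_nonneg.mpr hμpos.le)
        _ = 1 := inv_mul_cancel₀ hμpos.ne'
    · simp only [smul_smul, mul_inv_cancel₀ hμpos.ne', one_smul]
      abel
  refine le_antisymm ?_ ?_
  · refine le_of_forall_pos_le_add fun ε hε => ?_
    exact le_trans (csInf_le ⟨0, fun μ hμ => hμ.1⟩ (hmem (lam0 + ε) (by linarith))) le_rfl
  · refine le_csInf ⟨lam0 + 1, hmem _ (by linarith)⟩ ?_
    rintro μ ⟨hμ0, x, hAx⟩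
    have hl : ∀ l, h l ≤ μ + ⟪v l, x⟫ := by
      intro l
      apply Finset.sup'_le
      intro a ha
      obtain ⟨y, hyK, hy⟩ := hAx ha
      rw [hK] at hyK
      have h1 : ⟪v l, y⟫ ≤ 1 := hyK l
      rw [← hy, real_inner_comm, inner_add_right, real_inner_smul_right]
      have h2 : μ * ⟪v l, y⟫ ≤ μ * 1 := mul_le_mul_of_nonneg_left h1 hμ0
      linarith
    calc lam0 ≤ ∑ l, c l * (μ + ⟪v l, x⟫) :=
          Finset.sum_le_sum fun l _ => mul_le_mul_of_nonneg_left (hl l) (hc l)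
      _ = μ := by
          simp_rw [mul_add]
          rw [Finset.sum_add_distrib, ← Finset.sum_mul, hc1, one_mul, hx0 x, add_zero]
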